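/- Let G be a finite group which is a semidirect product T ⋊ Σ with T cyclic of order e coprime to p and Σ cyclic of order f, and let ρ be an irreducible representation of G over an algebraically closed field of characteristic p whose restriction to T is faithful and which is 1-dimensional on the subgroup T ⋊ Σ', where Σ' is the kernel of the action of Σ on T. Then the degree of ρ equals the index [Σ : Σ']. -/

import Mathlib

/-- The abelian subgroup `T ⋊ Σ' = T × Σ'` of `G = T ⋊ Σ`, where `Σ' = Ker(φ)` is the
kernel of the action of `Σ` on `T`. -/
def abelianPart {T S : Type*} [Group T] [Group S] (φ : S →* MulAut T) :
    Subgroup (T ⋊[φ] S) :=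
  SemidirectProduct.inl.range ⊔ Subgroup.map SemidirectProduct.inr (MonoidHom.ker φ)

/-- Let `G = T ⋊ Σ` with `T` cyclic of order `e` coprime to `p` and `Σ`
cyclic of order `f` acting by `σ·t = t^q`, and let `ρ` be an irreducible
representation of `G` over an algebraically closed field of characteristic `p` whose
restriction to `T` is faithful and which is 1-dimensional on the subgroup `T ⋊ Σ'`,
where `Σ'` is the kernel of the action of `Σ` on `T`.  Then `deg ρ = [Σ : Σ']`. -/
theorem stmt15 (p a q e f : ℕ) (hp : p.Prime) (hq : q = p ^ a)
    (hqf : e ∣ q ^ f - 1) (hf : 1 ≤ f) (hco : Nat.Coprime e p)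
    (T S : Type) [Group T] [Fintype T] [Group S] [Fintype S]
    (hT : IsCyclic T) (hTe : Fintype.card T = e)
    (σ : S) (hσ : ∀ x : S, x ∈ Subgroup.zpowers σ) (hSf : Fintype.card S = f)
    (φ : S →* MulAut T) (hφ : ∀ t : T, φ σ t = t ^ q)
    (F : Type) [Field F] [IsAlgClosed F] [CharP F p]
    (V : Type) [AddCommGroup V] [Module F V] [FiniteDimensional F V]
    (ρ : Representation F (T ⋊[φ] S) V)
    (hirr : IsSimpleModule (MonoidAlgebra F (T ⋊[φ] S)) ρ.asModule)
    -- `ρ` restricted to `T` is faithful: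
    (hfaith : ∀ t : T, ρ (SemidirectProduct.inl t) = 1 → t = 1)
    -- `ρ` is 1-dimensional on `T ⋊ Σ'`: some line is stable under `T ⋊ Σ'`:
    (hline : ∃ v : V, v ≠ 0 ∧ ∀ g ∈ abelianPart φ, ∃ c : F, ρ g v = c • v) :
    Module.finrank F V = (MonoidHom.ker φ).index := by
  classical
  obtain ⟨v, hv0, hv⟩ := hline
  set G := T ⋊[φ] S with hG
  set inl : T →* G := SemidirectProduct.inl with hinl
  set inr : S →* G := SemidirectProduct.inr with hinr
  set K := MonoidHom.ker φ with hK
  -- scalar cancellation on v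
  have hcancel : ∀ c c' : F, c • v = c' • v → c = c' := by
    intro c c' h
    by_contra hne
    have h2 : (c - c') • v = 0 := by rw [sub_smul, h, sub_self]
    rcases smul_eq_zero.mp h2 with h1 | h1
    · exact hne (sub_eq_zero.mp h1)
    · exact hv0 h1
  have hinl_mem : ∀ t : T, inl t ∈ abelianPart φ :=
    fun t => Subgroup.mem_sup_left ⟨t, rfl⟩
  have hinr_mem : ∀ s ∈ K, inr s ∈ abelianPart φ :=
    fun s hs => Subgroup.mem_sup_right ⟨s, hs, rfl⟩
  choose χ hχ using fun t : T => hv _ (hinl_mem t)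
  -- χ is multiplicative
  have hχmul : ∀ t u : T, χ (t * u) = χ t * χ u := by
    intro t u
    apply hcancel
    rw [← hχ, map_mul, map_mul, Module.End.mul_apply, hχ u, map_smul, hχ t, smul_smul, mul_comm]
  have hχone : χ 1 = 1 := by
    apply hcancel
    rw [← hχ, map_one, map_one, Module.End.one_apply, one_smul]
  have hχpow : ∀ (t : T) (n : ℕ), χ (t ^ n) = χ t ^ n := by
    intro t n
    induction n with
    | zero => simpa using hχone
    | succ n ih => rw [pow_succ, pow_succ, hχmul, ih]
  have hχne : ∀ t : T, χ t ≠ 0 := by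
    intro t h
    have h1 : χ t * χ t⁻¹ = 1 := by rw [← hχmul, mul_inv_cancel, hχone]
    rw [h, zero_mul] at h1
    exact zero_ne_one h1
  -- action powers
  have hφn : ∀ (n : ℕ) (t : T), φ (σ ^ n) t = t ^ q ^ n := by
    intro n
    induction n with
    | zero => intro t; simp
    | succ n ih =>
      intro t
      rw [pow_succ, map_mul, MulAut.mul_apply, hφ, ih, ← pow_mul, mul_comm, pow_succ]
  -- basic order facts
  have hepos : 0 < e := hTe ▸ Fintype.card_pos
  have hσf : σ ^ f = 1 := by rw [← hSf]; exact pow_card_eq_one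
  have hφσfin : IsOfFinOrder (φ σ) := by
    refine isOfFinOrder_iff_pow_eq_one.mpr ⟨f, hf, ?_⟩
    rw [← map_pow, hσf, map_one]
  set d := orderOf (φ σ) with hd
  have hdpos : 0 < d := hφσfin.orderOf_pos
  have hdK : ∀ n : ℕ, σ ^ n ∈ K ↔ d ∣ n := by
    intro n
    rw [hK, MonoidHom.mem_ker, map_pow, hd, orderOf_dvd_iff_pow_eq_one]
  -- index of K equals d
  have hrange : φ.range = Subgroup.zpowers (φ σ) := by
    apply le_antisymm
    · rintro x ⟨s, rfl⟩
      obtain ⟨k, rfl⟩ := Subgroup.mem_zpowers_iff.mp (hσ s)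
      rw [map_zpow]
      exact Subgroup.zpow_mem_zpowers _ _
    · rintro x hx
      obtain ⟨k, rfl⟩ := Subgroup.mem_zpowers_iff.mp hx
      exact ⟨σ ^ k, map_zpow φ σ k⟩
  have hKidx : K.index = d := by
    rw [hK, Subgroup.index_ker, hrange, Nat.card_zpowers]
  -- commutation relation
  have hcomm : ∀ (s : S) (t : T), inl t * inr s⁻¹ = inr s⁻¹ * inl (φ s t) := by
    intro s t
    have h1 := SemidirectProduct.inl_aut (φ := φ) s⁻¹ ((φ s) t)
    rw [inv_inv] at h1
    have h2 : (φ s⁻¹) (φ s t) = t := by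
      rw [← MulAut.mul_apply, ← map_mul, inv_mul_cancel, map_one, MulAut.one_apply]
    rw [h2] at h1
    rw [h1, mul_assoc, mul_assoc, ← map_mul, mul_inv_cancel, map_one, mul_one]
  -- the vectors w n and the span W
  set w : ℕ → V := fun n => ρ (inr (σ ^ n)⁻¹) v with hw
  set W : Submodule F V := Submodule.span F (Set.range w) with hW
  have hw0 : w 0 = v := by
    simp only [hw, pow_zero, inv_one, map_one, Module.End.one_apply]
  have heig : ∀ (n : ℕ) (t : T), ρ (inl t) (w n) = (χ t ^ q ^ n) • w n := by
    intro n t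
    have h1 : ρ (inl t) (w n) = ρ (inr (σ ^ n)⁻¹) (ρ (inl (φ (σ ^ n) t)) v) := by
      rw [hw]
      dsimp only
      rw [← Module.End.mul_apply, ← map_mul, hcomm (σ ^ n) t, map_mul, Module.End.mul_apply]
    rw [h1, hχ, map_smul, hφn, hχpow]
  have hwne : ∀ n, w n ≠ 0 := by
    intro n h
    apply hv0
    have h2 := congrArg (ρ (inr (σ ^ n))) h
    rw [map_zero, hw] at h2
    dsimp only at h2
    rw [← Module.End.mul_apply, ← map_mul, ← map_mul, mul_inv_cancel, map_one, map_one,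
      Module.End.one_apply] at h2
    exact h2
  have hwmem : ∀ n, w n ∈ W := fun n => Submodule.subset_span ⟨n, rfl⟩
  -- invariance of W
  have hforder : 0 < orderOf σ := orderOf_pos σ
  have hσinv : (σ ^ (orderOf σ - 1))⁻¹ = σ := by
    apply inv_eq_of_mul_eq_one_right
    rw [← pow_succ, Nat.sub_add_cancel hforder, pow_orderOf_eq_one]
  have hshift : ∀ n : ℕ, ρ (inr σ) (w n) = w (n + (orderOf σ - 1)) := by
    intro n
    have h1 : σ * (σ ^ n)⁻¹ = (σ ^ (n + (orderOf σ - 1)))⁻¹ := by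
      rw [pow_add, mul_inv_rev, hσinv]
    rw [hw]
    dsimp only
    rw [← Module.End.mul_apply, ← map_mul, ← map_mul, h1]
  have hWinl : ∀ (t : T), ∀ x ∈ W, ρ (inl t) x ∈ W := by
    intro t x hx
    induction hx using Submodule.span_induction with
    | mem x hxs =>
      obtain ⟨n, rfl⟩ := hxs
      rw [heig]
      exact W.smul_mem _ (hwmem n)
    | zero => rw [map_zero]; exact W.zero_mem
    | add x y _ _ hx hy => rw [map_add]; exact W.add_mem hx hy
    | smul c x _ hx => rw [map_smul]; exact W.smul_mem _ hx
  have hWσ : ∀ x ∈ W, ρ (inr σ) x ∈ W := by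
    intro x hx
    induction hx using Submodule.span_induction with
    | mem x hxs =>
      obtain ⟨n, rfl⟩ := hxs
      rw [hshift]
      exact hwmem _
    | zero => rw [map_zero]; exact W.zero_mem
    | add x y _ _ hx hy => rw [map_add]; exact W.add_mem hx hy
    | smul c x _ hx => rw [map_smul]; exact W.smul_mem _ hx
  have hWσn : ∀ (m : ℕ), ∀ x ∈ W, ρ (inr (σ ^ m)) x ∈ W := by
    intro m
    induction m with
    | zero => intro x hx; simpa using hx
    | succ m ih =>
      intro x hx
      have h1 : ρ (inr (σ ^ (m + 1))) x = ρ (inr σ) (ρ (inr (σ ^ m)) x) := by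
        rw [← Module.End.mul_apply, ← map_mul, ← map_mul, pow_succ']
      rw [h1]
      exact hWσ _ (ih x hx)
  have hWg : ∀ (g : G), ∀ x ∈ W, ρ g x ∈ W := by
    intro g x hx
    have hfin : IsOfFinOrder σ := isOfFinOrder_of_finite σ
    obtain ⟨m, hm⟩ := (Submonoid.mem_powers_iff _ _).mp
      (hfin.mem_powers_iff_mem_zpowers.mpr (hσ g.right))
    have hdec : g = inl g.left * inr g.right := (SemidirectProduct.inl_left_mul_inr_right g).symm
    rw [hdec, map_mul]
    rw [Module.End.mul_apply]
    apply hWinl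
    rw [← hm]
    exact hWσn m x hx
  -- W, as a MonoidAlgebra submodule, is everything
  haveI := hirr
  let P : Submodule (MonoidAlgebra F G) ρ.asModule :=
    { carrier := {x : ρ.asModule | ρ.asModuleEquiv x ∈ W}
      add_mem' := fun ha hb => by
        rw [Set.mem_setOf_eq, map_add]
        exact W.add_mem ha hb
      zero_mem' := by
        rw [Set.mem_setOf_eq, map_zero]
        exact W.zero_mem
      smul_mem' := by
        intro r x hx
        rw [Set.mem_setOf_eq, Representation.asModuleEquiv_map_smul]
        rw [Set.mem_setOf_eq] at hx
        set y := ρ.asModuleEquiv x with hy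
        induction r using MonoidAlgebra.induction_linear with
        | zero => rw [map_zero]; exact W.zero_mem
        | add f g hf hg =>
          rw [map_add]
          exact W.add_mem hf hg
        | single g c =>
          rw [Representation.asAlgebraHom_single, LinearMap.smul_apply]
          exact W.smul_mem _ (hWg g y hx) }
  have hPtop : P = ⊤ := by
    rcases eq_bot_or_eq_top P with h | h
    · exfalso
      apply hv0
      have hvW : v ∈ W := hw0 ▸ hwmem 0
      have hvP : ∀ y : ρ.asModule, y ∈ P → y = 0 := by
        rw [h]
        intro y hy
        simpa using hy
      have hmem : ρ.asModuleEquiv.symm v ∈ P := by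
        show ρ.asModuleEquiv (ρ.asModuleEquiv.symm v) ∈ W
        rw [LinearEquiv.apply_symm_apply]
        exact hvW
      have h0 := hvP _ hmem
      calc v = ρ.asModuleEquiv (ρ.asModuleEquiv.symm v) := (ρ.asModuleEquiv.apply_symm_apply v).symm
        _ = ρ.asModuleEquiv 0 := by rw [h0]
        _ = 0 := map_zero _
    · exact h
  have hWtop : ∀ x : V, x ∈ W := by
    intro x
    have h1 : ∀ y : ρ.asModule, y ∈ P := fun y => hPtop ▸ Submodule.mem_top
    have h2 : ρ.asModuleEquiv (ρ.asModuleEquiv.symm x) ∈ W := h1 (ρ.asModuleEquiv.symm x)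
    rwa [LinearEquiv.apply_symm_apply] at h2
  -- injectivity of χ
  have hχinj : ∀ t : T, χ t = 1 → t = 1 := by
    intro t ht
    apply hfaith t
    apply LinearMap.ext
    intro x
    rw [Module.End.one_apply]
    have hx := hWtop x
    induction hx using Submodule.span_induction with
    | mem x hxs =>
      obtain ⟨n, rfl⟩ := hxs
      rw [heig, ht, one_pow, one_smul]
    | zero => rw [map_zero]
    | add x y _ _ hx hy => rw [map_add, hx, hy]
    | smul c x _ hx => rw [map_smul, hx]
  -- upper bound
  have hspan : ∀ n : ℕ, ∃ c : F, w n = c • w (n % d) := by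
    intro n
    have hkK : σ ^ (d * (n / d)) ∈ K := (hdK _).mpr ⟨n / d, rfl⟩
    obtain ⟨c, hc⟩ := hv (inr ((σ ^ (d * (n / d)))⁻¹)) (hinr_mem _ (K.inv_mem hkK))
    refine ⟨c, ?_⟩
    have h1 : (σ ^ n)⁻¹ = (σ ^ (n % d))⁻¹ * (σ ^ (d * (n / d)))⁻¹ := by
      rw [← mul_inv_rev, ← pow_add]
      congr 1
      rw [Nat.div_add_mod]
    rw [hw]
    dsimp only
    rw [h1, map_mul, map_mul, Module.End.mul_apply, hc, map_smul]
  have hup : Module.finrank F V ≤ d := by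
    have hcard : Fintype.card (Fin d) = d := Fintype.card_fin d
    rw [← hcard]
    apply finrank_le_of_span_eq_top (v := fun i : Fin d => w i)
    rw [eq_top_iff]
    rintro x -
    have hx := hWtop x
    refine Submodule.span_le.mpr ?_ hx
    rintro y ⟨n, rfl⟩
    obtain ⟨c, hc⟩ := hspan n
    rw [hc]
    exact Submodule.smul_mem _ _
      (Submodule.subset_span ⟨⟨n % d, Nat.mod_lt n hdpos⟩, rfl⟩)
  -- lower bound
  obtain ⟨t₀, ht₀⟩ := hT.exists_generator
  have hordt₀ : orderOf t₀ = e := by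
    rw [← hTe]
    rw [← Nat.card_eq_fintype_card]
    exact orderOf_eq_card_of_forall_mem_zpowers ht₀
  set lam := χ t₀ with hlamdef
  have hlam : ∀ k : ℕ, lam ^ k = 1 → e ∣ k := by
    intro k hk
    have h1 : χ (t₀ ^ k) = 1 := by rw [hχpow]; exact hk
    have h2 : t₀ ^ k = 1 := hχinj _ h1
    exact hordt₀ ▸ orderOf_dvd_of_pow_eq_one h2
  have hcoq : Nat.Coprime e q := by rw [hq]; exact hco.pow_right a
  have hμaux : ∀ i j : ℕ, i ≤ j → j - i < d → lam ^ q ^ i = lam ^ q ^ j → i = j := by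
    intro i j hij hlt heq
    have hqpos : 0 < q := by
      rw [hq]; exact pow_pos hp.pos a
    have hkpos : 0 < q ^ (j - i) := pow_pos hqpos _
    have hqj : q ^ j = q ^ i * q ^ (j - i) := by
      rw [← pow_add]
      congr 1
      omega
    have h1 : lam ^ (q ^ i * (q ^ (j - i) - 1)) = 1 := by
      have h2 : lam ^ q ^ i * lam ^ (q ^ i * (q ^ (j - i) - 1)) = lam ^ q ^ i * 1 := by
        rw [mul_one, ← pow_add]
        rw [heq, hqj]
        congr 1
        set m := q ^ (j - i) - 1 with hm
        have hB : q ^ (j - i) = m + 1 := by omega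
        rw [hB]
        ring
      exact mul_left_cancel₀ (pow_ne_zero _ (hχne t₀)) h2
    have hediv : e ∣ q ^ (j - i) - 1 := by
      have := hlam _ h1
      exact (Nat.Coprime.dvd_of_dvd_mul_left (hcoq.pow_right i) this)
    -- hence φ (σ ^ (j - i)) = 1, so d ∣ j - i
    have hφ1 : (φ σ) ^ (j - i) = 1 := by
      rw [← map_pow]
      ext t
      show φ (σ ^ (j - i)) t = t
      rw [hφn]
      obtain ⟨c, hc⟩ := hediv
      have hte : t ^ e = 1 := by rw [← hTe]; exact pow_card_eq_one
      have : q ^ (j - i) = e * c + 1 := by omega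
      rw [this, pow_add, pow_mul, hte, one_pow, one_mul, pow_one]
    have hddvd : d ∣ j - i := orderOf_dvd_of_pow_eq_one hφ1
    have : j - i = 0 := Nat.eq_zero_of_dvd_of_lt hddvd hlt
    omega
  have hμinj : Function.Injective (fun i : Fin d => lam ^ q ^ (i : ℕ)) := by
    intro i j hij
    dsimp at hij
    rcases le_total (i : ℕ) (j : ℕ) with h | h
    · exact Fin.ext (hμaux i j h (by omega) hij)
    · exact (Fin.ext (hμaux j i h (by omega) hij.symm)).symm
  have hli : LinearIndependent F (fun i : Fin d => w i) := by
    apply Module.End.eigenvectors_linearIndependent' (ρ (inl t₀))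
      (fun i : Fin d => lam ^ q ^ (i : ℕ)) hμinj
    intro i
    constructor
    · rw [Module.End.mem_eigenspace_iff]
      exact heig i t₀
    · exact hwne i
  have hlow : d ≤ Module.finrank F V := by
    simpa using hli.fintype_card_le_finrank
  rw [hKidx]
  omega
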